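/- For any j with 1 ≤ j < D, if every collection node in subtree j receives at least 7 log n flags and forwards up to 14 log n excess flags uniformly at random to the 2^(D−j−1) collection nodes of subtree j+1, and the total number of forwarded flags is at least 14 log n · 2^(D−j−1), then with high probability every collection node of subtree j+1 receives at least 7 log n flags. -/

import Mathlib

open Finset

/-- Inductive load-balancing step. If at least `14 log n · B` flags
(`M` of them in total) are forwarded, each independently and uniformly at random,
to the `B = 2^(D-j-1) ≤ n` collection nodes of subtree `j+1`, then with high
probability (at least `1 - 1/n^c`) every collection node of subtree `j+1` receives
at least `7 log n` flags. Uniform independent forwarding is modeled by counting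
destination assignments `f : Fin M → Fin B`. -/
theorem stmt11 :
    ∃ c : ℝ, 0 < c ∧ ∃ N : ℕ, ∀ n : ℕ, N ≤ n → ∀ B M : ℕ,
      0 < B → B ≤ n → 14 * Real.logb 2 n * B ≤ M →
        1 - 1 / (n : ℝ) ^ c ≤
          (Nat.card {f : Fin M → Fin B //
              ∀ b : Fin B, 7 * Real.logb 2 n ≤ (Nat.card {i : Fin M // f i = b} : ℝ)} : ℝ)
            / (B : ℝ) ^ M := by
  classical
  refine ⟨1, one_pos, 2, ?_⟩
  intro n hn B M hB hBn hM
  have hn2 : (2:ℝ) ≤ (n:ℝ) := by exact_mod_cast hn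
  have hn0 : (0:ℝ) < n := by linarith
  set L : ℝ := Real.logb 2 n with hLdef
  have hL1 : 1 ≤ L := by
    have h2 : Real.logb 2 2 = 1 := Real.logb_self_eq_one (by norm_num)
    have := Real.logb_le_logb_of_le (b := 2) (by norm_num) (by norm_num) hn2
    rw [h2] at this; exact this
  have hB1 : (1:ℝ) ≤ (B:ℝ) := by exact_mod_cast hB
  have hBn' : (B:ℝ) ≤ (n:ℝ) := by exact_mod_cast hBn
  set T : ℕ := ⌈(7:ℝ) * L⌉₊ with hTdef
  have hT1 : 1 ≤ T := Nat.one_le_iff_ne_zero.mpr (by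
    have : 0 < T := Nat.ceil_pos.mpr (by linarith)
    omega)
  have hT1R : ((T - 1 : ℕ) : ℝ) ≤ 7 * L := by
    have h := Nat.ceil_lt_add_one (show (0:ℝ) ≤ 7 * L by linarith)
    rw [← hTdef] at h
    rw [Nat.cast_sub hT1]
    push_cast
    linarith [h]
  -- fiber count
  set Fc : (Fin M → Fin B) → Fin B → ℕ :=
    fun f b => (univ.filter (fun i => f i = b)).card with hFc
  have hNatcard : ∀ (f : Fin M → Fin B) (b : Fin B),
      Nat.card {i : Fin M // f i = b} = Fc f b := by
    intro f b
    rw [Nat.card_eq_fintype_card, Fintype.card_subtype]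
  -- good/bad sets
  set Gs : Finset (Fin M → Fin B) := univ.filter (fun f => ∀ b, T ≤ Fc f b) with hGs
  set Bs : Finset (Fin M → Fin B) := univ.filter (fun f => ¬ ∀ b, T ≤ Fc f b) with hBs
  have hcardGs : (Nat.card {f : Fin M → Fin B //
      ∀ b : Fin B, 7 * Real.logb 2 n ≤ (Nat.card {i : Fin M // f i = b} : ℝ)}) = Gs.card := by
    rw [Nat.card_eq_fintype_card, Fintype.card_subtype]
    congr 1
    apply Finset.filter_congr
    intro f _
    simp only [hNatcard]
    constructor
    · intro h b; exact Nat.ceil_le.mpr (h b)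
    · intro h b; exact le_trans (Nat.le_ceil _) (by exact_mod_cast h b)
  have hBpos : (0:ℝ) < (B:ℝ) ^ M := pow_pos (by linarith) M
  have hhalf : (0:ℝ) < (B:ℝ) - 1/2 := by linarith
  -- MGF computation per bin
  have hsum : ∀ b : Fin B,
      (∑ f : Fin M → Fin B, ((1:ℝ)/2) ^ (Fc f b)) = ((B:ℝ) - 1/2) ^ M := by
    intro b
    have h1 : ∀ f : Fin M → Fin B,
        ((1:ℝ)/2) ^ (Fc f b) = ∏ i, (if f i = b then (1/2:ℝ) else 1) := by
      intro f
      rw [Finset.prod_ite, Finset.prod_const, Finset.prod_const_one, mul_one]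
    simp_rw [h1]
    rw [← Fintype.sum_pow (fun v : Fin B => if v = b then (1/2:ℝ) else 1) M]
    congr 1
    have h2 : ∀ v : Fin B, (if v = b then (1/2:ℝ) else 1)
        = 1 - (if v = b then (1/2:ℝ) else 0) := by
      intro v; split <;> norm_num
    simp_rw [h2, Finset.sum_sub_distrib, Finset.sum_const, Finset.sum_ite_eq',
      Finset.mem_univ, if_true, Finset.card_univ, Fintype.card_fin, nsmul_eq_mul, mul_one]
  -- per-bin bad count bound
  have hbadb : ∀ b : Fin B,
      ((univ.filter (fun f : Fin M → Fin B => Fc f b < T)).card : ℝ)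
        ≤ 2 ^ (T-1) * ((B:ℝ) - 1/2) ^ M := by
    intro b
    set S := univ.filter (fun f : Fin M → Fin B => Fc f b < T) with hS
    have key : (S.card : ℝ) * ((1:ℝ)/2) ^ (T-1) ≤ ((B:ℝ) - 1/2) ^ M := by
      calc (S.card : ℝ) * ((1:ℝ)/2) ^ (T-1)
          = ∑ _f ∈ S, ((1:ℝ)/2) ^ (T-1) := by rw [Finset.sum_const, nsmul_eq_mul]
        _ ≤ ∑ f ∈ S, ((1:ℝ)/2) ^ (Fc f b) := by
            apply Finset.sum_le_sum
            intro f hf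
            rw [hS] at hf
            have hlt : Fc f b < T := (Finset.mem_filter.mp hf).2
            exact pow_le_pow_of_le_one (by norm_num) (by norm_num) (Nat.le_sub_one_of_lt hlt)
        _ ≤ ∑ f : Fin M → Fin B, ((1:ℝ)/2) ^ (Fc f b) := by
            apply Finset.sum_le_sum_of_subset_of_nonneg (Finset.subset_univ S)
            intro f _ _; positivity
        _ = ((B:ℝ) - 1/2) ^ M := hsum b
    have h2p : (0:ℝ) < (2:ℝ) ^ (T-1) := by positivity
    have h12 : ((1:ℝ)/2) ^ (T-1) = ((2:ℝ) ^ (T-1))⁻¹ := by rw [one_div, inv_pow]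
    rw [h12, ← div_eq_mul_inv, div_le_iff₀ h2p] at key
    linarith
  -- union bound
  have hBsCard : (Bs.card : ℝ) ≤ (B:ℝ) * (2 ^ (T-1) * ((B:ℝ) - 1/2) ^ M) := by
    have hsub : Bs ⊆ univ.biUnion (fun b : Fin B => univ.filter (fun f => Fc f b < T)) := by
      intro f hf
      simp only [hBs, Finset.mem_filter, Finset.mem_univ, true_and, not_forall, not_le] at hf
      obtain ⟨b, hb⟩ := hf
      simp only [Finset.mem_biUnion, Finset.mem_filter, Finset.mem_univ, true_and]
      exact ⟨b, hb⟩
    have h1 : Bs.card ≤ ∑ b : Fin B, (univ.filter (fun f : Fin M → Fin B => Fc f b < T)).card :=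
      le_trans (Finset.card_le_card hsub) (Finset.card_biUnion_le)
    calc (Bs.card : ℝ) ≤ ∑ b : Fin B,
          ((univ.filter (fun f : Fin M → Fin B => Fc f b < T)).card : ℝ) := by
            exact_mod_cast h1
      _ ≤ ∑ _b : Fin B, (2:ℝ) ^ (T-1) * ((B:ℝ) - 1/2) ^ M := Finset.sum_le_sum fun b _ => hbadb b
      _ = (B:ℝ) * (2 ^ (T-1) * ((B:ℝ) - 1/2) ^ M) := by
            rw [Finset.sum_const, Finset.card_univ, Fintype.card_fin, nsmul_eq_mul]
  -- key analytic bound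
  have e1 : ((B:ℝ) - 1/2) ^ M ≤ (B:ℝ) ^ M * Real.exp (-((M:ℝ)/(2*B))) := by
    have hb0 : (0:ℝ) < (B:ℝ) := by linarith
    have hsplit : (B:ℝ) - 1/2 = (B:ℝ) * (1 - 1/(2*(B:ℝ))) := by field_simp
    have hxnn : (0:ℝ) ≤ 1 - 1/(2*(B:ℝ)) := by
      have h' : 1/(2*(B:ℝ)) ≤ 1 := by rw [div_le_one (by linarith)]; linarith
      linarith
    have hx : (1:ℝ) - 1/(2*(B:ℝ)) ≤ Real.exp (-(1/(2*(B:ℝ)))) := by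
      have := Real.add_one_le_exp (-(1/(2*(B:ℝ)))); linarith
    calc ((B:ℝ) - 1/2) ^ M = (B:ℝ) ^ M * (1 - 1/(2*(B:ℝ))) ^ M := by rw [hsplit, mul_pow]
      _ ≤ (B:ℝ) ^ M * (Real.exp (-(1/(2*(B:ℝ))))) ^ M := by
          exact mul_le_mul_of_nonneg_left (pow_le_pow_left₀ hxnn hx M)
            (pow_nonneg (by linarith) M)
      _ = (B:ℝ) ^ M * Real.exp (-((M:ℝ)/(2*B))) := by
          rw [← Real.exp_nat_mul]
          congr 1
          ring
  have e2 : (n:ℝ) * ((B:ℝ) * (2:ℝ) ^ (T-1)) ≤ Real.exp ((M:ℝ)/(2*B)) := by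
    have hpow : (2:ℝ) ^ (T-1) ≤ (n:ℝ) ^ (7:ℕ) := by
      have h1 : (2:ℝ) ^ (((T-1:ℕ)):ℝ) ≤ (2:ℝ) ^ (7*L) :=
        Real.rpow_le_rpow_of_exponent_le one_le_two hT1R
      rw [Real.rpow_natCast] at h1
      have h2 : (2:ℝ) ^ (7*L) = (n:ℝ) ^ (7:ℕ) := by
        rw [mul_comm, Real.rpow_mul (by norm_num : (0:ℝ) ≤ 2),
          Real.rpow_logb (by norm_num) (by norm_num) hn0, ← Real.rpow_natCast (n:ℝ) 7]
        norm_num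
      linarith
    have hn9 : (n:ℝ) * ((B:ℝ) * (2:ℝ) ^ (T-1)) ≤ (n:ℝ) ^ (9:ℕ) := by
      calc (n:ℝ) * ((B:ℝ) * (2:ℝ) ^ (T-1)) ≤ (n:ℝ) * ((n:ℝ) * (n:ℝ) ^ (7:ℕ)) := by
            apply mul_le_mul_of_nonneg_left _ (le_of_lt hn0)
            apply mul_le_mul hBn' hpow (by positivity) (le_of_lt hn0)
        _ = (n:ℝ) ^ (9:ℕ) := by ring
    have hexp7 : (n:ℝ) ^ (9:ℕ) ≤ Real.exp (7 * L) := by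
      have hlog2 : (0:ℝ) < Real.log 2 := Real.log_pos (by norm_num)
      have hlogn : Real.log 2 ≤ Real.log n := Real.log_le_log (by norm_num) hn2
      have hlognn : (0:ℝ) ≤ Real.log n := by linarith
      have hrw : (n:ℝ) ^ (9:ℕ) = Real.exp (9 * Real.log n) := by
        rw [← Real.exp_log hn0, ← Real.exp_nat_mul]
        norm_num
      have hd9 : Real.log 2 < 0.6931471808 := Real.log_two_lt_d9
      have hL7 : 9 * Real.log n ≤ 7 * L := by
        have h9 : (0:ℝ) ≤ 9 * Real.log n := by linarith
        have h1 : 9 * Real.log n * Real.log 2 ≤ 9 * Real.log n * 0.6931471808 :=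
          mul_le_mul_of_nonneg_left hd9.le h9
        rw [hLdef, ← Real.log_div_log, ← mul_div_assoc, le_div_iff₀ hlog2]
        nlinarith [hlognn, h1]
      rw [hrw]
      exact Real.exp_le_exp.mpr hL7
    have hmono : Real.exp (7 * L) ≤ Real.exp ((M:ℝ)/(2*B)) := by
      apply Real.exp_le_exp.mpr
      rw [le_div_iff₀ (by positivity : (0:ℝ) < 2*(B:ℝ))]
      linarith [hM]
    linarith
  have hkey : (n:ℝ) * ((B:ℝ) * ((2:ℝ) ^ (T-1) * ((B:ℝ) - 1/2) ^ M)) ≤ (B:ℝ) ^ M := by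
    calc (n:ℝ) * ((B:ℝ) * ((2:ℝ) ^ (T-1) * ((B:ℝ) - 1/2) ^ M))
        = ((n:ℝ) * ((B:ℝ) * (2:ℝ) ^ (T-1))) * ((B:ℝ) - 1/2) ^ M := by ring
      _ ≤ Real.exp ((M:ℝ)/(2*B)) * ((B:ℝ) ^ M * Real.exp (-((M:ℝ)/(2*B)))) :=
          mul_le_mul e2 e1 (pow_nonneg (le_of_lt hhalf) M) (le_of_lt (Real.exp_pos _))
      _ = (B:ℝ) ^ M * (Real.exp ((M:ℝ)/(2*B)) * Real.exp (-((M:ℝ)/(2*B)))) := by ring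
      _ = (B:ℝ) ^ M := by rw [← Real.exp_add]; simp
  -- finish
  have hsplitcard : Gs.card + Bs.card = B ^ M := by
    rw [hGs, hBs, Finset.card_filter_add_card_filter_not, Finset.card_univ]
    simp [Fintype.card_fun]
  have hBsn : (Bs.card : ℝ) * (n:ℝ) ≤ (B:ℝ) ^ M := by
    calc (Bs.card : ℝ) * (n:ℝ) ≤ ((B:ℝ) * (2 ^ (T-1) * ((B:ℝ) - 1/2) ^ M)) * (n:ℝ) := by
          apply mul_le_mul_of_nonneg_right hBsCard (le_of_lt hn0)
      _ = (n:ℝ) * ((B:ℝ) * ((2:ℝ) ^ (T-1) * ((B:ℝ) - 1/2) ^ M)) := by ring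
      _ ≤ (B:ℝ) ^ M := hkey
  rw [hcardGs, Real.rpow_one]
  have hGsR : (Gs.card : ℝ) = (B:ℝ) ^ M - (Bs.card : ℝ) := by
    have : ((Gs.card + Bs.card : ℕ) : ℝ) = ((B ^ M : ℕ) : ℝ) := by exact_mod_cast hsplitcard
    push_cast at this
    linarith
  rw [hGsR, sub_div, div_self (ne_of_gt hBpos)]
  have hfrac : (Bs.card : ℝ) / (B:ℝ) ^ M ≤ 1 / (n:ℝ) := by
    rw [div_le_div_iff₀ hBpos hn0]
    linarith
  linarith
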